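/- Let K = ℓ²(ℕ) (indexed from n = 1) with standard orthonormal basis (e_n)_n, and put H = K ⊕ K. Let A be the weighted shift operator A = ∑_n (1/n) e_{n+1} ⊗ e_n, i.e. (Ax)₁ = 0 and (Ax)_{n+1} = x_n/n, and let B be the diagonal operator with diagonals (1/n)_n, i.e. (Bx)_n = x_n/n. Then the systems (H; K ⊕ 0, graph(A)) and (H; K ⊕ 0, graph(B)) are not boundedly isomorphic. -/

import Mathlib

/- STATEMENT 13: On K = ℓ²(ℕ) (indexed from 1), let A = ∑ₙ (1/n) e_{n+1} ⊗ eₙ be the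
weighted shift ((Ax)₁ = 0, (Ax)_{n+1} = xₙ/n) and B the diagonal operator with diagonals
(1/n)ₙ. Then (K ⊕ K; K ⊕ 0, graph A) and (K ⊕ K; K ⊕ 0, graph B) are not boundedly
isomorphic. (Indexing: Lean's n : ℕ corresponds to the paper's n + 1.) -/

noncomputable section

abbrev K : Type := lp (fun _ : ℕ => ℂ) 2

/-- The graph of the weighted shift A with (Ax)₀ = 0 and (Ax)_{n+1} = xₙ/(n+1). -/
def shiftGraph : Submodule ℂ (K × K) where
  carrier := {p | p.2 0 = 0 ∧ ∀ n, p.2 (n + 1) = p.1 n / ((n : ℂ) + 1)}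
  add_mem' := by
    rintro p q ⟨hp0, hp⟩ ⟨hq0, hq⟩
    refine ⟨?_, fun n => ?_⟩
    · simp [Prod.snd_add, lp.coeFn_add, hp0, hq0]
    · simp only [Prod.snd_add, Prod.fst_add, lp.coeFn_add, Pi.add_apply, hp n, hq n]
      ring
  zero_mem' := ⟨by simp [lp.coeFn_zero], fun n => by simp [lp.coeFn_zero]⟩
  smul_mem' := by
    rintro c p ⟨hp0, hp⟩
    refine ⟨?_, fun n => ?_⟩
    · simp [Prod.smul_snd, lp.coeFn_smul, hp0]
    · simp only [Prod.smul_snd, Prod.smul_fst, lp.coeFn_smul, Pi.smul_apply, hp n,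
        smul_eq_mul]
      ring

/-- The graph of the diagonal operator with diagonals (1/(n+1))ₙ. -/
def diagGraph : Submodule ℂ (K × K) where
  carrier := {p | ∀ n, p.2 n = p.1 n / ((n : ℂ) + 1)}
  add_mem' := by
    intro p q hp hq n
    simp only [Prod.snd_add, Prod.fst_add, lp.coeFn_add, Pi.add_apply, hp n, hq n]
    ring
  zero_mem' := by
    intro n
    simp [lp.coeFn_zero]
  smul_mem' := by
    intro c p hp n
    simp only [Prod.smul_snd, Prod.smul_fst, lp.coeFn_smul, Pi.smul_apply, hp n, smul_eq_mul]
    ring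


/-- Evaluation at coordinate 0 as a continuous linear functional on K. -/
def ev0 : K →L[ℂ] ℂ :=
  LinearMap.mkContinuous
    { toFun := fun f => f 0
      map_add' := fun f g => by simp [lp.coeFn_add]
      map_smul' := fun c f => by simp [lp.coeFn_smul] }
    1 (fun f => by show ‖f 0‖ ≤ 1 * ‖f‖; simpa using lp.norm_apply_le_norm two_ne_zero f 0)

theorem shift_and_diagonal_graphs_not_boundedly_isomorphic :
    ¬ ∃ V : (K × K) ≃L[ℂ] (K × K),
        V '' (((⊤ : Submodule ℂ K).prod (⊥ : Submodule ℂ K)) : Set (K × K)) =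
          (((⊤ : Submodule ℂ K).prod (⊥ : Submodule ℂ K)) : Set (K × K)) ∧
        V '' (shiftGraph : Set (K × K)) = (diagGraph : Set (K × K)) := by
  rintro ⟨V, hE, hG⟩
  set W := V.symm with hWdef
  -- W maps E into E and diagGraph into shiftGraph
  have hEmem : ∀ p : K × K, p.2 = 0 → (W p).2 = 0 := by
    intro p hp
    have hpE : p ∈ (((⊤ : Submodule ℂ K).prod (⊥ : Submodule ℂ K)) : Set (K × K)) := by
      exact Submodule.mem_prod.mpr ⟨trivial, by simpa using hp⟩
    rw [← hE] at hpE
    obtain ⟨q, hq, rfl⟩ := hpE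
    rw [hWdef, V.symm_apply_apply]
    simpa using hq.2
  have hGmem : ∀ p : K × K, p ∈ (diagGraph : Set (K × K)) → (W p).2 0 = 0 := by
    intro p hp
    rw [← hG] at hp
    obtain ⟨q, hq, rfl⟩ := hp
    rw [hWdef, V.symm_apply_apply]
    exact hq.1
  -- the continuous linear functional p ↦ (W p).2 0
  set g : (K × K) →L[ℂ] ℂ :=
    ev0.comp ((ContinuousLinearMap.snd ℂ K K).comp (W : (K × K) →L[ℂ] (K × K))) with hgdef
  have hg : ∀ p : K × K, g p = (W p).2 0 := fun p => rfl
  -- g vanishes on E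
  have hgE : ∀ x : K, g (x, (0 : K)) = 0 := by
    intro x
    rw [hg, hEmem (x, (0 : K)) rfl]
    simp [lp.coeFn_zero]
  -- g vanishes on pairs (0, single n c)
  have hgS : ∀ (n : ℕ) (c : ℂ), g ((0 : K), lp.single 2 n c) = 0 := by
    intro n c
    set v : K := lp.single 2 n (((n : ℂ) + 1) * c) with hv
    have hmem : (v, lp.single 2 n c) ∈ (diagGraph : Set (K × K)) := by
      intro m
      by_cases h : m = n
      · subst h
        have hm : ((m : ℂ) + 1) ≠ 0 := Nat.cast_add_one_ne_zero m
        simp only [hv, lp.single_apply_self]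
        field_simp
      · simp [hv, lp.single_apply_ne 2 n _ h, Pi.single_eq_of_ne h]
    have hsplit : ((0 : K), lp.single 2 n c) = (v, lp.single 2 n c) - (v, (0 : K)) := by
      simp [Prod.ext_iff]
    rw [hsplit, map_sub, hgE v, hg _, hGmem _ hmem, sub_zero]
  -- by density of finitely supported sequences, g vanishes on (0, y) for all y
  have hgK : ∀ y : K, g ((0 : K), y) = 0 := by
    intro y
    have hs : HasSum (fun i => lp.single 2 i (y i)) y :=
      lp.hasSum_single (by norm_num) y
    have hs2 : HasSum (fun i => g ((0 : K), lp.single 2 i (y i))) (g ((0 : K), y)) := by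
      have := hs.mapL (g.comp (ContinuousLinearMap.inr ℂ K K))
      simpa using this
    have hs0 : HasSum (fun i => g ((0 : K), lp.single 2 i (y i))) 0 := by
      have : (fun i => g ((0 : K), lp.single 2 i (y i))) = fun _ => (0 : ℂ) := by
        funext i; exact hgS i (y i)
      rw [this]; exact hasSum_zero
    exact hs2.unique hs0
  -- hence g = 0
  have hgzero : ∀ p : K × K, g p = 0 := by
    intro p
    have : p = (p.1, (0 : K)) + ((0 : K), p.2) := by simp
    rw [this, map_add, hgE, hgK, add_zero]
  -- but g (V (0, e₀)) = 1
  have h1 : g (V ((0 : K), lp.single 2 0 (1 : ℂ))) = 1 := by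
    rw [hg, hWdef, V.symm_apply_apply]
    simp [lp.single_apply_self]
  rw [hgzero] at h1
  exact one_ne_zero h1.symm

end
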